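/- Let r>0, ρ>0, α∈(0,1], z>0 and w∈ℝ. Let C:[0,∞)→[0,∞) be measurable and locally integrable, let Z be the habit process with Z(0)=z, and assume C(t) ≥ α·Z(t) for all t≥0. Let W be the wealth process with W(0)=w. Then W(t) > 0 for all t ≥ 0 if and only if W(t) ≥ x̲·Z(t) for all t ≥ 0, where x̲ := α/(r+ρ(1−α)) is the safe level. -/

import Mathlib

open Topology MeasureTheory Set

lemma exp_int (lam a b : ℝ) :
    ∫ u in a..b, lam * Real.exp (lam * u) = Real.exp (lam * b) - Real.exp (lam * a) := by
  have hd : ∀ u : ℝ, HasDerivAt (fun x => Real.exp (lam * x)) (lam * Real.exp (lam * u)) u := by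
    intro u
    have h := (Real.hasDerivAt_exp (lam * u)).comp u ((hasDerivAt_id u).const_mul lam)
    exact h.congr_deriv (by ring)
  exact intervalIntegral.integral_eq_sub_of_hasDerivAt (fun u _ => hd u)
    ((Continuous.mul continuous_const (Real.continuous_exp.comp (continuous_const.mul continuous_id))).intervalIntegrable a b)

lemma fubini_step (lam s t : ℝ) (hst : s ≤ t) {g : ℝ → ℝ} (hgm : Measurable g)
    (hg : IntegrableOn g (Set.Ioc s t)) :
    ∫ u in s..t, lam * Real.exp (lam * u) * ∫ v in s..u, g v
      = ∫ v in s..t, (Real.exp (lam * t) - Real.exp (lam * v)) * g v := by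
  set μ : Measure ℝ := volume.restrict (Set.Ioc s t) with hμ
  haveI : IsFiniteMeasure μ := ⟨by
    rw [hμ, Measure.restrict_apply_univ]; exact measure_Ioc_lt_top⟩
  set G : ℝ × ℝ → ℝ := fun q => lam * Real.exp (lam * q.1) * g q.2 with hG
  set S : Set (ℝ × ℝ) := {q : ℝ × ℝ | q.2 ≤ q.1} with hS
  have hSmeas : MeasurableSet S := (isClosed_le continuous_snd continuous_fst).measurableSet
  set F : ℝ → ℝ → ℝ := fun u v => S.indicator G (u, v) with hF
  have hunc : Function.uncurry F = S.indicator G := by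
    funext p; simp [Function.uncurry, hF]
  have hGmeas : Measurable G := by
    exact (((measurable_fst.const_mul lam).exp.const_mul lam).mul (hgm.comp measurable_snd))
  have hFmeas : Measurable (Function.uncurry F) := by
    rw [hunc]; exact hGmeas.indicator hSmeas
  -- integrability on the product
  set B : ℝ := |lam| * Real.exp (|lam| * (|s| + |t|)) with hB
  have hint : Integrable (Function.uncurry F) (μ.prod μ) := by
    have hbd : Integrable (fun p : ℝ × ℝ => B * |g p.2|) (μ.prod μ) := by
      have h1 : Integrable (fun _ : ℝ => (1:ℝ)) μ := integrable_const 1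
      have h2 : Integrable (fun v => B * |g v|) μ := by
        have : Integrable (fun v => |g v|) μ := hg.norm
        exact this.const_mul B
      simpa using h1.mul_prod h2
    have hmem : ∀ᵐ p ∂(μ.prod μ), p ∈ Set.Ioc s t ×ˢ Set.Ioc s t := by
      rw [hμ, Measure.prod_restrict]
      exact ae_restrict_mem (measurableSet_Ioc.prod measurableSet_Ioc)
    refine Integrable.mono' hbd hFmeas.aestronglyMeasurable ?_
    filter_upwards [hmem] with p hp
    have h1 : ‖Function.uncurry F p‖ ≤ ‖G p‖ := by
      rw [hunc]; exact norm_indicator_le_norm_self G p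
    refine h1.trans ?_
    have hp1 : |p.1| ≤ |s| + |t| := by
      rcases hp.1 with ⟨h1', h2'⟩
      rw [abs_le]; constructor
      · nlinarith [abs_nonneg s, abs_nonneg t, neg_abs_le s, le_abs_self s]
      · nlinarith [abs_nonneg s, abs_nonneg t, neg_abs_le t, le_abs_self t]
    have hexp : Real.exp (lam * p.1) ≤ Real.exp (|lam| * (|s| + |t|)) := by
      apply Real.exp_le_exp.2
      calc lam * p.1 ≤ |lam * p.1| := le_abs_self _
        _ = |lam| * |p.1| := abs_mul _ _
        _ ≤ |lam| * (|s| + |t|) := by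
            exact mul_le_mul_of_nonneg_left hp1 (abs_nonneg lam)
    have : ‖G p‖ = |lam| * Real.exp (lam * p.1) * |g p.2| := by
      rw [hG]; simp [abs_mul, abs_of_pos (Real.exp_pos _)]
    rw [this, hB]
    have := Real.exp_pos (lam * p.1)
    nlinarith [abs_nonneg (g p.2), abs_nonneg lam, mul_le_mul_of_nonneg_left hexp (abs_nonneg lam)]
  -- step 1 : rewrite LHS as double integral
  have step1 : ∀ u ∈ Set.Ioc s t,
      lam * Real.exp (lam * u) * (∫ v in s..u, g v) = ∫ v, F u v ∂μ := by
    intro u hu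
    have h1 : (fun v => F u v) = (Set.Iic u).indicator (fun v => lam * Real.exp (lam * u) * g v) := by
      funext v
      simp only [hF, hS, Set.indicator_apply, Set.mem_setOf_eq, Set.mem_Iic]
      rfl
    rw [h1, integral_indicator measurableSet_Iic, hμ,
      Measure.restrict_restrict measurableSet_Iic]
    have h2 : Set.Iic u ∩ Set.Ioc s t = Set.Ioc s u := by
      ext v; simp only [Set.mem_inter_iff, Set.mem_Iic, Set.mem_Ioc, Set.mem_Ioc]
      constructor
      · rintro ⟨h1', h2', _⟩; exact ⟨h2', h1'⟩
      · rintro ⟨h1', h2'⟩; exact ⟨h2', h1', h2'.trans hu.2⟩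
    rw [h2, MeasureTheory.integral_const_mul, ← intervalIntegral.integral_of_le (le_of_lt hu.1)]
  -- step 2 : inner integral after swap
  have step2 : ∀ v ∈ Set.Ioc s t,
      (∫ u, F u v ∂μ) = (Real.exp (lam * t) - Real.exp (lam * v)) * g v := by
    intro v hv
    have h1 : (fun u => F u v) = (Set.Ici v).indicator (fun u => lam * Real.exp (lam * u) * g v) := by
      funext u
      simp only [hF, hS, Set.indicator_apply, Set.mem_setOf_eq, Set.mem_Ici]
      rfl
    rw [h1, integral_indicator measurableSet_Ici, hμ,
      Measure.restrict_restrict measurableSet_Ici]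
    have h2 : Set.Ici v ∩ Set.Ioc s t = Set.Icc v t := by
      ext u; simp only [Set.mem_inter_iff, Set.mem_Ici, Set.mem_Ioc, Set.mem_Icc]
      constructor
      · rintro ⟨h1', _, h3'⟩; exact ⟨h1', h3'⟩
      · rintro ⟨h1', h2'⟩; exact ⟨h1', lt_of_lt_of_le hv.1 h1', h2'⟩
    rw [h2, integral_mul_const, integral_Icc_eq_integral_Ioc,
      ← intervalIntegral.integral_of_le hv.2, exp_int]
  calc ∫ u in s..t, lam * Real.exp (lam * u) * ∫ v in s..u, g v
      = ∫ u, (lam * Real.exp (lam * u) * ∫ v in s..u, g v) ∂μ := by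
        rw [intervalIntegral.integral_of_le hst, hμ]
    _ = ∫ u, (∫ v, F u v ∂μ) ∂μ := by
        rw [hμ]
        refine setIntegral_congr_fun measurableSet_Ioc ?_
        intro u hu; exact step1 u hu
    _ = ∫ v, (∫ u, F u v ∂μ) ∂μ := integral_integral_swap hint
    _ = ∫ v, ((Real.exp (lam * t) - Real.exp (lam * v)) * g v) ∂μ := by
        rw [hμ]
        refine setIntegral_congr_fun measurableSet_Ioc ?_
        intro v hv; exact step2 v hv
    _ = ∫ v in s..t, (Real.exp (lam * t) - Real.exp (lam * v)) * g v := by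
        rw [intervalIntegral.integral_of_le hst, hμ]

/-- Integration by parts for `e^{λu}·(z + ∫_0^u g)`. -/
lemma ibp (lam z s t : ℝ) (h0s : 0 ≤ s) (hst : s ≤ t) {g : ℝ → ℝ} (hgm : Measurable g)
    (hg : IntegrableOn g (Set.Icc 0 t)) :
    Real.exp (lam * t) * (z + ∫ v in (0:ℝ)..t, g v)
      - Real.exp (lam * s) * (z + ∫ v in (0:ℝ)..s, g v)
      = ∫ u in s..t, (lam * Real.exp (lam * u) * (z + ∫ v in (0:ℝ)..u, g v)
          + Real.exp (lam * u) * g u) := by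
  have h0t : (0:ℝ) ≤ t := h0s.trans hst
  have hg0s : IntervalIntegrable g volume 0 s :=
    (intervalIntegrable_iff_integrableOn_Icc_of_le h0s).2
      (hg.mono_set (Set.Icc_subset_Icc le_rfl hst))
  have hgsu : ∀ u ∈ Set.Icc s t, IntervalIntegrable g volume s u := by
    intro u hu
    exact (intervalIntegrable_iff_integrableOn_Icc_of_le hu.1).2
      (hg.mono_set (Set.Icc_subset_Icc h0s hu.2))
  have hgst : IntervalIntegrable g volume s t := hgsu t ⟨hst, le_rfl⟩
  -- split ∫_0^u = ∫_0^s + ∫_s^u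
  have hsplit : ∀ u ∈ Set.Icc s t,
      z + ∫ v in (0:ℝ)..u, g v = (z + ∫ v in (0:ℝ)..s, g v) + ∫ v in s..u, g v := by
    intro u hu
    rw [add_assoc, intervalIntegral.integral_add_adjacent_intervals hg0s (hgsu u hu)]
  set A := z + ∫ v in (0:ℝ)..s, g v with hA
  -- continuity of the primitive
  have hPcont : ContinuousOn (fun u => ∫ v in s..u, g v) (Set.Icc s t) := by
    have := intervalIntegral.continuousOn_primitive_interval
      (f := g) (a := s) (b := t) (μ := volume) ?_
    · rwa [Set.uIcc_of_le hst] at this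
    · rw [Set.uIcc_of_le hst]
      exact hg.mono_set (Set.Icc_subset_Icc h0s le_rfl)
  -- integrability of the three pieces
  have hexpc : Continuous (fun u : ℝ => Real.exp (lam * u)) :=
    Real.continuous_exp.comp (continuous_const.mul continuous_id)
  have hi1 : IntervalIntegrable (fun u => lam * Real.exp (lam * u) * A) volume s t :=
    (((continuous_const.mul hexpc).mul continuous_const).intervalIntegrable s t)
  have hi2 : IntervalIntegrable (fun u => lam * Real.exp (lam * u) * ∫ v in s..u, g v) volume s t := by
    apply ContinuousOn.intervalIntegrable
    rw [Set.uIcc_of_le hst]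
    exact ((continuous_const.mul ((Real.continuous_exp.comp (continuous_const.mul continuous_id)))).continuousOn).mul hPcont
  have hi3 : IntervalIntegrable (fun u => Real.exp (lam * u) * g u) volume s t := by
    apply IntervalIntegrable.continuousOn_mul hgst
    exact (Real.continuous_exp.comp (continuous_const.mul continuous_id)).continuousOn
  have key : ∫ u in s..t, (lam * Real.exp (lam * u) * (z + ∫ v in (0:ℝ)..u, g v)
          + Real.exp (lam * u) * g u)
      = ∫ u in s..t, (lam * Real.exp (lam * u) * A
          + lam * Real.exp (lam * u) * (∫ v in s..u, g v) + Real.exp (lam * u) * g u) := by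
    apply intervalIntegral.integral_congr
    intro u hu
    rw [Set.uIcc_of_le hst] at hu
    dsimp only
    rw [hsplit u hu]; ring
  rw [key, intervalIntegral.integral_add (hi1.add hi2) hi3,
    intervalIntegral.integral_add hi1 hi2]
  have e1 : ∫ u in s..t, lam * Real.exp (lam * u) * A
      = (Real.exp (lam * t) - Real.exp (lam * s)) * A := by
    rw [intervalIntegral.integral_mul_const, exp_int]
  have e2 : ∫ u in s..t, lam * Real.exp (lam * u) * ∫ v in s..u, g v
      = ∫ v in s..t, (Real.exp (lam * t) - Real.exp (lam * v)) * g v := by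
    apply fubini_step lam s t hst hgm
    exact hg.mono_set (fun x hx => ⟨le_trans h0s (le_of_lt hx.1), hx.2⟩)
  rw [e1, e2]
  have e3 : ∫ v in s..t, (Real.exp (lam * t) - Real.exp (lam * v)) * g v
      = Real.exp (lam * t) * (∫ v in s..t, g v) - ∫ v in s..t, Real.exp (lam * v) * g v := by
    have : (fun v => (Real.exp (lam * t) - Real.exp (lam * v)) * g v)
        = fun v => Real.exp (lam * t) * g v - Real.exp (lam * v) * g v := by
      funext v; ring
    rw [this, intervalIntegral.integral_sub (hgst.continuousOn_mul continuousOn_const) hi3,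
      intervalIntegral.integral_const_mul]
  rw [e3, hsplit t ⟨hst, le_rfl⟩]
  ring

lemma integrableOn_cont_mul {a b : ℝ} {c f : ℝ → ℝ} (hc : Continuous c)
    (hf : IntegrableOn f (Set.Icc a b)) : IntegrableOn (fun u => c u * f u) (Set.Icc a b) := by
  obtain ⟨M, hM⟩ := isCompact_Icc.exists_bound_of_continuousOn hc.continuousOn
  refine Integrable.mono' (hf.norm.const_mul M) ?_ ?_
  · exact (hc.aestronglyMeasurable.restrict).mul hf.1
  · filter_upwards [ae_restrict_mem measurableSet_Icc] with x hx
    rw [norm_mul]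
    exact mul_le_mul_of_nonneg_right (hM x hx) (norm_nonneg _)


lemma gronwall_null (b r : ℝ) (hb : 0 ≤ b) {D : ℝ → ℝ}
    (hcont : ContinuousOn D (Set.Icc 0 b))
    (heq : ∀ t ∈ Set.Icc 0 b, D t = ∫ u in (0:ℝ)..t, r * D u) :
    ∀ t ∈ Set.Icc 0 b, D t = 0 := by
  have hrD : ContinuousOn (fun u => r * D u) (Set.Icc 0 b) := continuousOn_const.mul hcont
  have hInt : IntegrableOn (fun u => r * D u) (Set.Icc 0 b) := hrD.integrableOn_Icc
  set H : ℝ → ℝ := fun x => ∫ u in (0:ℝ)..x, r * D u with hHdef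
  have hH : ContinuousOn H (Set.Icc 0 b) := by
    have := intervalIntegral.continuousOn_primitive_interval
      (f := fun u => r * D u) (a := 0) (b := b) (μ := volume) (by rwa [Set.uIcc_of_le hb])
    rwa [Set.uIcc_of_le hb] at this
  have hderiv : ∀ x ∈ Set.Ico 0 b, HasDerivWithinAt H (r * D x) (Set.Ici x) x := by
    intro x hx
    have h2 : Set.Icc 0 b ∈ nhdsWithin x (Set.Ioi x) :=
      mem_nhdsWithin.2 ⟨Set.Iio b, isOpen_Iio, hx.2,
        fun y hy => ⟨hx.1.trans (le_of_lt hy.2), le_of_lt hy.1⟩⟩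
    have hmeas : StronglyMeasurableAtFilter (fun u => r * D u) (nhdsWithin x (Set.Ioi x)) volume :=
      ⟨Set.Icc 0 b, h2, hrD.aestronglyMeasurable measurableSet_Icc⟩
    have hcw : ContinuousWithinAt (fun u => r * D u) (Set.Ioi x) x :=
      (hrD x ⟨hx.1, le_of_lt hx.2⟩).mono_of_mem_nhdsWithin h2
    have hii : IntervalIntegrable (fun u => r * D u) volume 0 x :=
      (intervalIntegrable_iff_integrableOn_Icc_of_le hx.1).2
        (hInt.mono_set (Set.Icc_subset_Icc le_rfl (le_of_lt hx.2)))
    exact intervalIntegral.integral_hasDerivWithinAt_right hii hmeas hcw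
  have hball := norm_le_gronwallBound_of_norm_deriv_right_le (f := H)
    (f' := fun x => r * D x) (δ := 0) (K := |r|) (ε := 0) (a := 0) (b := b)
    hH hderiv (by simp [hHdef]) ?_
  · intro t ht
    have h1 := hball t ht
    rw [gronwallBound_ε0_δ0] at h1
    have h2 : H t = 0 := norm_le_zero_iff.1 h1
    rw [heq t ht]; exact h2
  · intro x hx
    have hDx : D x = H x := heq x ⟨hx.1, le_of_lt hx.2⟩
    rw [norm_mul, Real.norm_eq_abs, Real.norm_eq_abs, hDx, add_zero, Real.norm_eq_abs]

lemma W_eq_WE (r w : ℝ) {C W : ℝ → ℝ} (hCmeas : Measurable C)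
    (hCloc : ∀ T, 0 ≤ T → IntegrableOn C (Set.Icc 0 T))
    (hW : ∀ t, 0 ≤ t → W t = w + ∫ u in (0:ℝ)..t, (r * W u - C u)) :
    ∀ t, 0 ≤ t → W t
      = Real.exp (r * t) * (w + ∫ u in (0:ℝ)..t, -(Real.exp (-(r * u)) * C u)) := by
  set gE : ℝ → ℝ := fun u => -(Real.exp (-(r * u)) * C u) with hgE
  set WE : ℝ → ℝ := fun t => Real.exp (r * t) * (w + ∫ u in (0:ℝ)..t, gE u) with hWE
  show ∀ t, 0 ≤ t → W t = WE t
  have hgEm : Measurable gE := by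
    apply Measurable.neg
    exact (Real.measurable_exp.comp (measurable_id.const_mul r).neg).mul hCmeas
  have hgEint : ∀ T, 0 ≤ T → IntegrableOn gE (Set.Icc 0 T) := by
    intro T hT
    have h := (integrableOn_cont_mul (c := fun u => Real.exp (-(r * u))) (f := C)
      (Real.continuous_exp.comp (continuous_const.mul continuous_id).neg) (hCloc T hT)).neg
    exact h
  have hexpc : Continuous (fun u : ℝ => Real.exp (r * u)) :=
    Real.continuous_exp.comp (continuous_const.mul continuous_id)
  -- WE satisfies the integral equation
  have hWEeq : ∀ t, 0 ≤ t → WE t = w + ∫ u in (0:ℝ)..t, (r * WE u - C u) := by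
    intro t ht
    have h := ibp r w 0 t le_rfl ht hgEm (hgEint t ht)
    simp only [intervalIntegral.integral_same, mul_zero, Real.exp_zero, add_zero, one_mul] at h
    have h2 : ∫ u in (0:ℝ)..t, (r * Real.exp (r * u) * (w + ∫ v in (0:ℝ)..u, gE v)
        + Real.exp (r * u) * gE u) = ∫ u in (0:ℝ)..t, (r * WE u - C u) := by
      apply intervalIntegral.integral_congr
      intro u hu
      have h1 : Real.exp (r * u) * Real.exp (-(r * u)) = 1 := by
        rw [← Real.exp_add, add_neg_cancel, Real.exp_zero]
      show r * Real.exp (r * u) * (w + ∫ v in (0:ℝ)..u, gE v)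
          + Real.exp (r * u) * gE u = r * WE u - C u
      rw [hWE, hgE]
      dsimp only
      linear_combination (-(C u)) * h1
    rw [h2] at h
    rw [hWE]
    dsimp only
    linarith [h]
  -- continuity of WE
  have hWEcont : ∀ T, 0 ≤ T → ContinuousOn WE (Set.Icc 0 T) := by
    intro T hT
    apply (hexpc.continuousOn).mul
    apply continuousOn_const.add
    have := intervalIntegral.continuousOn_primitive_interval
      (f := gE) (a := 0) (b := T) (μ := volume)
      (by rw [Set.uIcc_of_le hT]; exact hgEint T hT)
    rwa [Set.uIcc_of_le hT] at this
  have hWEC : ∀ T, 0 ≤ T → IntegrableOn (fun u => r * WE u - C u) (Set.Icc 0 T) := by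
    intro T hT
    exact ((continuousOn_const.mul (hWEcont T hT)).integrableOn_Icc).sub (hCloc T hT)
  set f : ℝ → ℝ := fun u => r * W u - C u with hf
  -- uniqueness on any interval where f is integrable
  have hUniq : ∀ b, 0 ≤ b → IntegrableOn f (Set.Icc 0 b) → ∀ t ∈ Set.Icc 0 b, W t = WE t := by
    intro b hb hfint
    have hWcont : ContinuousOn W (Set.Icc 0 b) := by
      have h1 : ContinuousOn (fun t => w + ∫ u in (0:ℝ)..t, f u) (Set.Icc 0 b) := by
        apply continuousOn_const.add
        have := intervalIntegral.continuousOn_primitive_interval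
          (f := f) (a := 0) (b := b) (μ := volume) (by rwa [Set.uIcc_of_le hb])
        rwa [Set.uIcc_of_le hb] at this
      exact h1.congr fun t ht => hW t ht.1
    have hDeq : ∀ t ∈ Set.Icc 0 b, W t - WE t = ∫ u in (0:ℝ)..t, r * (W u - WE u) := by
      intro t ht
      have hif : IntervalIntegrable f volume 0 t :=
        (intervalIntegrable_iff_integrableOn_Icc_of_le ht.1).2
          (hfint.mono_set (Set.Icc_subset_Icc le_rfl ht.2))
      have hiWE : IntervalIntegrable (fun u => r * WE u - C u) volume 0 t :=
        (intervalIntegrable_iff_integrableOn_Icc_of_le ht.1).2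
          ((hWEC b hb).mono_set (Set.Icc_subset_Icc le_rfl ht.2))
      rw [hW t ht.1, hWEeq t ht.1, add_sub_add_left_eq_sub,
        ← intervalIntegral.integral_sub hif hiWE]
      apply intervalIntegral.integral_congr
      intro u _
      dsimp only [hf]
      ring
    intro t ht
    have := gronwall_null b r hb (hWcont.sub (hWEcont b hb)) hDeq t ht
    linarith [this, Pi.sub_apply W WE t]
  have hIcc0 : ∀ (h : ℝ → ℝ), IntegrableOn h (Set.Icc 0 0) := by
    intro h
    have : volume.restrict (Set.Icc (0:ℝ) 0) = 0 := by
      rw [Set.Icc_self, Measure.restrict_eq_zero]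
      exact measure_singleton 0
    rw [IntegrableOn, this]
    exact integrable_zero_measure
  by_cases hall : ∀ τ, 0 ≤ τ → IntegrableOn f (Set.Icc 0 τ)
  · exact fun t ht => hUniq t ht (hall t ht) t ⟨ht, le_rfl⟩
  · exfalso
    push_neg at hall
    obtain ⟨τ0, hτ00, hτ0n⟩ := hall
    set B : Set ℝ := {τ : ℝ | 0 ≤ τ ∧ IntegrableOn f (Set.Icc 0 τ)} with hB
    have h0B : (0:ℝ) ∈ B := ⟨le_rfl, hIcc0 f⟩
    have hne : B.Nonempty := ⟨0, h0B⟩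
    have hdown : ∀ τ ∈ B, ∀ σ, 0 ≤ σ → σ ≤ τ → σ ∈ B := by
      intro τ hτ σ h1 h2
      exact ⟨h1, hτ.2.mono_set (Set.Icc_subset_Icc le_rfl h2)⟩
    have hbdd : BddAbove B := by
      by_contra hb
      rw [not_bddAbove_iff] at hb
      obtain ⟨y, hyB, hy⟩ := hb τ0
      exact hτ0n (hdown y hyB τ0 hτ00 (le_of_lt hy)).2
    set τ := sSup B with hτ
    have hτ0 : 0 ≤ τ := le_csSup hbdd h0B
    have hIcoB : ∀ σ, 0 ≤ σ → σ < τ → σ ∈ B := by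
      intro σ h1 h2
      obtain ⟨b', hb'B, hσb'⟩ := exists_lt_of_lt_csSup hne h2
      exact hdown b' hb'B σ h1 (le_of_lt hσb')
    have hIco : ∀ u ∈ Set.Ico 0 τ, W u = WE u := fun u hu =>
      hUniq u hu.1 (hIcoB u hu.1 hu.2).2 u ⟨hu.1, le_rfl⟩
    have hWw : ∀ u, τ < u → W u = w := by
      intro u hu
      have hu0 : 0 ≤ u := hτ0.trans (le_of_lt hu)
      have hnB : u ∉ B := fun h => absurd (le_csSup hbdd h) (not_le.2 hu)
      have h1 : ¬ IntegrableOn f (Set.Icc 0 u) := fun h => hnB ⟨hu0, h⟩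
      have h2 : ¬ IntervalIntegrable f volume 0 u := by
        rw [intervalIntegrable_iff_integrableOn_Icc_of_le hu0]; exact h1
      rw [hW u hu0, intervalIntegral.integral_undef h2, add_zero]
    -- τ ∈ B
    have hτB : τ ∈ B := by
      refine ⟨hτ0, ?_⟩
      have h1 : IntegrableOn (fun u => r * WE u - C u) (Set.Ico 0 τ) :=
        (hWEC τ hτ0).mono_set Set.Ico_subset_Icc_self
      have h2 : IntegrableOn f (Set.Ico 0 τ) := by
        apply h1.congr_fun ?_ measurableSet_Ico
        intro u hu
        show r * WE u - C u = r * W u - C u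
        rw [hIco u hu]
      rw [integrableOn_Icc_iff_integrableOn_Ico]
      exact h2
    have hτ1 : τ + 1 ∈ B := by
      refine ⟨by linarith, ?_⟩
      have h3 : IntegrableOn (fun u => r * w - C u) (Set.Ioc τ (τ + 1)) := by
        exact Integrable.sub (integrableOn_const measure_Ioc_lt_top.ne)
          ((hCloc (τ + 1) (by linarith)).mono_set
            (fun x hx => ⟨hτ0.trans (le_of_lt hx.1), hx.2⟩))
      have h4 : IntegrableOn f (Set.Ioc τ (τ + 1)) := by
        apply h3.congr_fun ?_ measurableSet_Ioc
        intro u hu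
        show r * w - C u = r * W u - C u
        rw [hWw u hu.1]
      exact (hτB.2.union h4).mono_set (by
        intro x hx
        rcases le_or_gt x τ with h | h
        · exact Or.inl ⟨hx.1, h⟩
        · exact Or.inr ⟨h, hx.2⟩)
    have := le_csSup hbdd hτ1
    linarith

/-- Lower Grönwall: if `h s + c∫ₛᵘ h ≤ h u` on `[s,t]` then `h s e^{c(t-s)} ≤ h t`. -/
lemma gronwall_lower (c s t : ℝ) (hc : 0 ≤ c) (hst : s ≤ t) {h : ℝ → ℝ}
    (hcontOn : ContinuousOn h (Set.Icc s t))
    (hcontAt : ∀ u ∈ Set.Ioo s t, ContinuousAt h u)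
    (hineq : ∀ u ∈ Set.Icc s t, h s + c * ∫ v in s..u, h v ≤ h u) :
    h s * Real.exp (c * (t - s)) ≤ h t := by
  rcases eq_or_lt_of_le hst with rfl | hlt
  · simp
  set P : ℝ → ℝ := fun u => ∫ v in s..u, h v with hP
  have hPint : IntegrableOn h (Set.Icc s t) := hcontOn.integrableOn_Icc
  set φ : ℝ → ℝ := fun u => Real.exp (-(c * u)) * (h s + c * P u) with hφ
  have hPcont : ContinuousOn P (Set.Icc s t) := by
    have := intervalIntegral.continuousOn_primitive_interval
      (f := h) (a := s) (b := t) (μ := volume) (by rwa [Set.uIcc_of_le hst])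
    rwa [Set.uIcc_of_le hst] at this
  have hφcont : ContinuousOn φ (Set.Icc s t) := by
    apply ContinuousOn.mul
    · exact (Real.continuous_exp.comp (continuous_const.mul continuous_id).neg).continuousOn
    · exact continuousOn_const.add (continuousOn_const.mul hPcont)
  have hderiv : ∀ u ∈ Set.Ioo s t,
      HasDerivAt φ (-(c * Real.exp (-(c * u)) * (h s + c * P u)) + Real.exp (-(c * u)) * (c * h u)) u := by
    intro u hu
    have hmem : Set.Icc s t ∈ nhds u := Icc_mem_nhds hu.1 hu.2
    have hPd : HasDerivAt P (h u) u := by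
      apply intervalIntegral.integral_hasDerivAt_right
      · exact (intervalIntegrable_iff_integrableOn_Icc_of_le (le_of_lt hu.1)).2
          (hPint.mono_set (Set.Icc_subset_Icc le_rfl (le_of_lt hu.2)))
      · exact ⟨Set.Icc s t, hmem, hcontOn.aestronglyMeasurable measurableSet_Icc⟩
      · exact hcontAt u hu
    have h1 : HasDerivAt (fun x => h s + c * P x) (c * h u) u :=
      ((hPd.const_mul c).const_add (h s))
    have h2 : HasDerivAt (fun x => Real.exp (-(c * x))) (-c * Real.exp (-(c * u))) u := by
      have := (Real.hasDerivAt_exp (-(c * u))).comp u (((hasDerivAt_id u).const_mul c).neg)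
      exact this.congr_deriv (by ring)
    exact (h2.mul h1).congr_deriv (by ring)
  have hmono : MonotoneOn φ (Set.Icc s t) := by
    apply monotoneOn_of_deriv_nonneg (convex_Icc s t) hφcont
    · intro x hx
      rw [interior_Icc] at hx
      exact (hderiv x hx).differentiableAt.differentiableWithinAt
    · intro x hx
      rw [interior_Icc] at hx
      rw [(hderiv x hx).deriv]
      have h3 := hineq x ⟨le_of_lt hx.1, le_of_lt hx.2⟩
      have h4 : (0:ℝ) < Real.exp (-(c * x)) := Real.exp_pos _
      have h5 : h s + c * P x ≤ h x := h3
      nlinarith [mul_nonneg (mul_nonneg hc (le_of_lt h4)) (sub_nonneg.2 h5)]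
  have hst' : φ s ≤ φ t := hmono ⟨le_rfl, hst⟩ ⟨hst, le_rfl⟩ hst
  have hφs : φ s = Real.exp (-(c * s)) * h s := by
    have hPs : P s = 0 := intervalIntegral.integral_same
    show Real.exp (-(c * s)) * (h s + c * P s) = Real.exp (-(c * s)) * h s
    rw [hPs]; ring
  have hφt : φ t ≤ Real.exp (-(c * t)) * h t := by
    show Real.exp (-(c * t)) * (h s + c * P t) ≤ Real.exp (-(c * t)) * h t
    have h6 : h s + c * P t ≤ h t := hineq t ⟨hst, le_rfl⟩
    exact mul_le_mul_of_nonneg_left h6 (le_of_lt (Real.exp_pos _))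
  have key : Real.exp (-(c * s)) * h s ≤ Real.exp (-(c * t)) * h t := by
    calc Real.exp (-(c * s)) * h s = φ s := hφs.symm
      _ ≤ φ t := hst'
      _ ≤ _ := hφt
  have e1 : Real.exp (c * t) * Real.exp (-(c * s)) = Real.exp (c * (t - s)) := by
    rw [← Real.exp_add]; congr 1; ring
  have e2 : Real.exp (c * t) * Real.exp (-(c * t)) = 1 := by
    rw [← Real.exp_add, add_neg_cancel, Real.exp_zero]
  have h3 := mul_le_mul_of_nonneg_left key (le_of_lt (Real.exp_pos (c * t)))
  have h3' : (Real.exp (c * t) * Real.exp (-(c * s))) * h s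
      ≤ (Real.exp (c * t) * Real.exp (-(c * t))) * h t := by linarith [h3]
  rw [e1, e2, one_mul] at h3'
  linarith [h3']

/-- The consumption-habit process `Z(t) = e^{-ρt}(z + ∫_0^t ρ e^{ρu} C(u) du)`. -/
noncomputable def habit (ρ z : ℝ) (C : ℝ → ℝ) (t : ℝ) : ℝ :=
  Real.exp (-(ρ * t)) * (z + ∫ u in (0:ℝ)..t, ρ * Real.exp (ρ * u) * C u)

set_option maxHeartbeats 1000000 in
/-- Lemma 2.1, no-ruin condition: wealth stays positive iff the
wealth-to-habit ratio stays at or above the safe level `x̲ = α/(r + ρ(1-α))`. -/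
theorem no_ruin_iff (r ρ α z w : ℝ)
    (hr : 0 < r) (hρ : 0 < ρ) (hα : α ∈ Set.Ioc (0:ℝ) 1) (hz : 0 < z)
    (C W : ℝ → ℝ)
    (hCmeas : Measurable C)
    (hCnonneg : ∀ t, 0 ≤ t → 0 ≤ C t)
    (hCloc : ∀ T, 0 < T → MeasureTheory.IntegrableOn C (Set.Icc 0 T))
    (hhabit : ∀ t, 0 ≤ t → α * habit ρ z C t ≤ C t)
    (hW : ∀ t, 0 ≤ t → W t = w + ∫ u in (0:ℝ)..t, (r * W u - C u)) :
    (∀ t, 0 ≤ t → 0 < W t) ↔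
      (∀ t, 0 ≤ t → α / (r + ρ * (1 - α)) * habit ρ z C t ≤ W t) := by
  obtain ⟨hα0, hα1⟩ := hα
  have hCloc' : ∀ T, 0 ≤ T → IntegrableOn C (Set.Icc 0 T) := by
    intro T hT
    rcases lt_or_eq_of_le hT with hlt | heq
    · exact hCloc T hlt
    · rw [← heq]
      have h0 : volume.restrict (Set.Icc (0:ℝ) 0) = 0 := by
        rw [Set.Icc_self, Measure.restrict_eq_zero]; exact measure_singleton 0
      rw [IntegrableOn, h0]
      exact integrable_zero_measure
  have hkpos : 0 < r + ρ * (1 - α) := by nlinarith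
  set g : ℝ → ℝ := fun u => ρ * Real.exp (ρ * u) * C u with hgdef
  have hgm : Measurable g :=
    ((Real.measurable_exp.comp (measurable_id.const_mul ρ)).const_mul ρ).mul hCmeas
  have hgint : ∀ T, 0 ≤ T → IntegrableOn g (Set.Icc 0 T) := by
    intro T hT
    exact integrableOn_cont_mul (c := fun u => ρ * Real.exp (ρ * u))
      (continuous_const.mul (Real.continuous_exp.comp (continuous_const.mul continuous_id)))
      (hCloc' T hT)
  set Z : ℝ → ℝ := habit ρ z C with hZset
  set Y : ℝ → ℝ := fun u => z + ∫ v in (0:ℝ)..u, g v with hYdef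
  have hZY : ∀ u, Z u = Real.exp (-(ρ * u)) * Y u := fun u => rfl
  have hYcont : ∀ T, 0 ≤ T → ContinuousOn Y (Set.Icc 0 T) := by
    intro T hT
    apply continuousOn_const.add
    have := intervalIntegral.continuousOn_primitive_interval
      (f := g) (a := 0) (b := T) (μ := volume)
      (by rw [Set.uIcc_of_le hT]; exact hgint T hT)
    rwa [Set.uIcc_of_le hT] at this
  have hYat : ∀ u : ℝ, 0 < u → ContinuousAt Y u := by
    intro u hu
    exact (hYcont (u + 1) (by linarith)).continuousAt (Icc_mem_nhds hu (by linarith))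
  have hintnn : ∀ t, 0 ≤ t → 0 ≤ ∫ v in (0:ℝ)..t, g v := by
    intro t ht
    apply intervalIntegral.integral_nonneg ht
    intro v hv
    show 0 ≤ ρ * Real.exp (ρ * v) * C v
    exact mul_nonneg (mul_nonneg hρ.le (Real.exp_pos _).le) (hCnonneg v hv.1)
  have hYpos : ∀ t, 0 ≤ t → 0 < Y t := by
    intro t ht
    show 0 < z + ∫ v in (0:ℝ)..t, g v
    linarith [hintnn t ht]
  have hZpos : ∀ t, 0 ≤ t → 0 < Z t := by
    intro t ht
    rw [hZY t]
    exact mul_pos (Real.exp_pos _) (hYpos t ht)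
  constructor
  · -- hard direction
    intro hpos
    by_contra hcon
    push_neg at hcon
    obtain ⟨t0, ht0, hlt⟩ := hcon
    set k := r + ρ * (1 - α) with hkdef
    -- Z lower bound
    have hZlow : ∀ s u : ℝ, 0 ≤ s → s ≤ u →
        Z s * Real.exp (-(ρ * (1 - α)) * (u - s)) ≤ Z u := by
      intro s u hs hsu
      have hu0 : 0 ≤ u := hs.trans hsu
      have hYineq : ∀ v ∈ Set.Icc s u, Y s + ρ * α * ∫ x in s..v, Y x ≤ Y v := by
        intro v hv
        have hv0 : 0 ≤ v := hs.trans hv.1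
        have hadd : (∫ x in (0:ℝ)..s, g x) + ∫ x in s..v, g x = ∫ x in (0:ℝ)..v, g x :=
          intervalIntegral.integral_add_adjacent_intervals
            ((intervalIntegrable_iff_integrableOn_Icc_of_le hs).2 (hgint s hs))
            ((intervalIntegrable_iff_integrableOn_Icc_of_le hv.1).2
              ((hgint v hv0).mono_set (Set.Icc_subset_Icc hs le_rfl)))
        have hYv : Y v = Y s + ∫ x in s..v, g x := by
          show z + ∫ x in (0:ℝ)..v, g x = (z + ∫ x in (0:ℝ)..s, g x) + ∫ x in s..v, g x
          rw [← hadd]; ring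
        have hmono : ∫ x in s..v, ρ * α * Y x ≤ ∫ x in s..v, g x := by
          apply intervalIntegral.integral_mono_on hv.1
          · apply ContinuousOn.intervalIntegrable
            rw [Set.uIcc_of_le hv.1]
            exact continuousOn_const.mul ((hYcont v hv0).mono (Set.Icc_subset_Icc hs le_rfl))
          · exact (intervalIntegrable_iff_integrableOn_Icc_of_le hv.1).2
              ((hgint v hv0).mono_set (Set.Icc_subset_Icc hs le_rfl))
          · intro x hx
            have hx0 : 0 ≤ x := hs.trans hx.1
            have hCZ := hhabit x hx0
            have h1 := mul_le_mul_of_nonneg_left hCZ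
              (le_of_lt (mul_pos hρ (Real.exp_pos (ρ * x))))
            have h2 : Real.exp (ρ * x) * Z x = Y x := by
              rw [hZY x, ← mul_assoc, ← Real.exp_add, add_neg_cancel, Real.exp_zero, one_mul]
            show ρ * α * Y x ≤ ρ * Real.exp (ρ * x) * C x
            nlinarith [h1, h2]
        have hcm : ρ * α * ∫ x in s..v, Y x = ∫ x in s..v, ρ * α * Y x :=
          (intervalIntegral.integral_const_mul _ _).symm
        linarith [hmono, hYv.ge, hYv.le, hcm.le, hcm.ge]
      have hkey := gronwall_lower (ρ * α) s u (by positivity) hsu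
        ((hYcont u hu0).mono (Set.Icc_subset_Icc hs le_rfl))
        (fun x hx => hYat x (lt_of_le_of_lt hs hx.1))
        hYineq
      rw [hZY s, hZY u]
      have h3 := mul_le_mul_of_nonneg_left hkey (le_of_lt (Real.exp_pos (-(ρ * u))))
      have e1 : Real.exp (-(ρ * u)) * Real.exp (ρ * α * (u - s))
          = Real.exp (-(ρ * s)) * Real.exp (-(ρ * (1 - α)) * (u - s)) := by
        rw [← Real.exp_add, ← Real.exp_add]; congr 1; ring
      have e1' := congrArg (fun x => Y s * x) e1
      linarith [h3, e1'.le, e1'.ge]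
    -- explicit form of W
    have hWWE := W_eq_WE r w hCmeas hCloc' hW
    set gE : ℝ → ℝ := fun u => -(Real.exp (-(r * u)) * C u) with hgEdef
    have hgEint : ∀ T, 0 ≤ T → IntegrableOn gE (Set.Icc 0 T) := by
      intro T hT
      exact (integrableOn_cont_mul (c := fun u => Real.exp (-(r * u)))
        (Real.continuous_exp.comp (continuous_const.mul continuous_id).neg)
        (hCloc' T hT)).neg
    have hWneg : ∀ t, 0 ≤ t → Real.exp (-(r * t)) * W t = w + ∫ u in (0:ℝ)..t, gE u := by
      intro t ht
      rw [hWWE t ht, ← mul_assoc, ← Real.exp_add, neg_add_cancel, Real.exp_zero, one_mul]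
    -- time horizon
    have hε : 0 < α / k * Z t0 - W t0 := by linarith [hlt]
    set ε := α / k * Z t0 - W t0 with hεdef
    set X := α / k * Z t0 / ε + 1 with hXdef
    have hxbZ : 0 < α / k * Z t0 := mul_pos (div_pos hα0 hkpos) (hZpos t0 ht0)
    have hX1 : 1 ≤ X := by
      rw [hXdef]
      linarith [div_nonneg hxbZ.le hε.le]
    have hXpos : 0 < X := lt_of_lt_of_le one_pos hX1
    set T := Real.log X / r with hTdef
    have hT0 : 0 ≤ T := div_nonneg (Real.log_nonneg hX1) hr.le
    set t1 := t0 + T with ht1def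
    have h01 : t0 ≤ t1 := by rw [ht1def]; linarith
    have ht10 : 0 ≤ t1 := ht0.trans h01
    have hE1 : Real.exp (r * (t1 - t0)) = X := by
      have hd : t1 - t0 = T := by rw [ht1def]; ring
      rw [hd, hTdef, show r * (Real.log X / r) = Real.log X by field_simp]
      exact Real.exp_log hXpos
    -- interval integrability transfer
    have hIIg : ∀ (F : ℝ → ℝ), IntegrableOn F (Set.Icc 0 t1) →
        IntervalIntegrable F volume t0 t1 := by
      intro F hF
      exact (intervalIntegrable_iff_integrableOn_Icc_of_le h01).2
        (hF.mono_set (Set.Icc_subset_Icc ht0 le_rfl))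
    -- master identity
    have hWdiff : Real.exp (-(r * t1)) * W t1 - Real.exp (-(r * t0)) * W t0
        = ∫ u in t0..t1, gE u := by
      rw [hWneg t1 ht10, hWneg t0 ht0]
      have hadd := intervalIntegral.integral_add_adjacent_intervals
        ((intervalIntegrable_iff_integrableOn_Icc_of_le ht0).2 (hgEint t0 ht0))
        (hIIg gE (hgEint t1 ht10))
      linarith [hadd]
    have hibp := ibp (-(r + ρ)) z t0 t1 ht0 h01 hgm (hgint t1 ht10)
    have hfold : ∀ u : ℝ, (z + ∫ v in (0:ℝ)..u, g v) = Y u := fun _ => rfl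
    simp only [hfold] at hibp
    have hZexp : ∀ u : ℝ, Real.exp (-(r + ρ) * u) * Y u = Real.exp (-(r * u)) * Z u := by
      intro u
      have harg : -(r + ρ) * u = -(r * u) + -(ρ * u) := by ring
      rw [hZY u, harg, Real.exp_add, mul_assoc]
    have hYc1 : ContinuousOn Y (Set.Icc 0 t1) := hYcont t1 ht10
    have hecρ : Continuous (fun u : ℝ => Real.exp (-(ρ * u))) :=
      Real.continuous_exp.comp (continuous_const.mul continuous_id).neg
    have hecr : Continuous (fun u : ℝ => Real.exp (-(r * u))) :=
      Real.continuous_exp.comp (continuous_const.mul continuous_id).neg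
    have hZc1 : ContinuousOn Z (Set.Icc 0 t1) := by
      exact (hecρ.continuousOn.mul hYc1).congr (fun x _ => hZY x)
    have hi_gE : IntervalIntegrable (fun u => ρ * gE u) volume t0 t1 :=
      (hIIg gE (hgEint t1 ht10)).const_mul ρ
    have hi_bp1 : IntervalIntegrable (fun u => -(r + ρ) * Real.exp (-(r + ρ) * u) * Y u)
        volume t0 t1 := by
      apply ContinuousOn.intervalIntegrable
      rw [Set.uIcc_of_le h01]
      exact ((continuous_const.mul (Real.continuous_exp.comp
        (continuous_const.mul continuous_id))).continuousOn).mul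
        (hYc1.mono (Set.Icc_subset_Icc ht0 le_rfl))
    have hi_bp2 : IntervalIntegrable (fun u => Real.exp (-(r + ρ) * u) * g u) volume t0 t1 :=
      hIIg _ (integrableOn_cont_mul (c := fun u => Real.exp (-(r + ρ) * u))
        (Real.continuous_exp.comp (continuous_const.mul continuous_id)) (hgint t1 ht10))
    set I := ∫ u in t0..t1, Real.exp (-(r * u)) * Z u with hIdef
    have master : ρ * (Real.exp (-(r * t1)) * W t1) + Real.exp (-(r * t1)) * Z t1
        - (ρ * (Real.exp (-(r * t0)) * W t0) + Real.exp (-(r * t0)) * Z t0)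
        = -(r + ρ) * I := by
      have hW2 : ρ * (Real.exp (-(r * t1)) * W t1) - ρ * (Real.exp (-(r * t0)) * W t0)
          = ∫ u in t0..t1, ρ * gE u := by
        rw [intervalIntegral.integral_const_mul]
        linear_combination ρ * hWdiff
      have hsum : (∫ u in t0..t1, ρ * gE u)
          + (∫ u in t0..t1, (-(r + ρ) * Real.exp (-(r + ρ) * u) * Y u
              + Real.exp (-(r + ρ) * u) * g u))
          = ∫ u in t0..t1, -(r + ρ) * (Real.exp (-(r * u)) * Z u) := by
        rw [← intervalIntegral.integral_add hi_gE (hi_bp1.add hi_bp2)]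
        apply intervalIntegral.integral_congr
        intro u _
        have qq : Real.exp (-(r + ρ) * u) * Real.exp (ρ * u) = Real.exp (-(r * u)) := by
          rw [← Real.exp_add]; congr 1; ring
        have p2 := hZexp u
        show ρ * gE u + (-(r + ρ) * Real.exp (-(r + ρ) * u) * Y u
            + Real.exp (-(r + ρ) * u) * g u)
            = -(r + ρ) * (Real.exp (-(r * u)) * Z u)
        show ρ * (-(Real.exp (-(r * u)) * C u)) + (-(r + ρ) * Real.exp (-(r + ρ) * u) * Y u
            + Real.exp (-(r + ρ) * u) * (ρ * Real.exp (ρ * u) * C u))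
            = -(r + ρ) * (Real.exp (-(r * u)) * Z u)
        linear_combination (ρ * C u) * qq - (r + ρ) * p2
      have hsum2 : ∫ u in t0..t1, -(r + ρ) * (Real.exp (-(r * u)) * Z u) = -(r + ρ) * I := by
        rw [hIdef]
        exact intervalIntegral.integral_const_mul _ _
      have hZ1 := (hZexp t1).symm
      have hZ0 := (hZexp t0).symm
      linarith [hW2, hibp, hsum, hsum2, hZ1, hZ0]
    -- lower bound on I
    set J := ∫ u in t0..t1, Real.exp (-k * u) with hJdef
    have hkJ : k * J = Real.exp (-k * t0) - Real.exp (-k * t1) := by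
      have h1 := exp_int (-k) t0 t1
      rw [intervalIntegral.integral_const_mul] at h1
      rw [hJdef]
      linarith [h1]
    have hIlow : Z t0 * Real.exp (ρ * (1 - α) * t0) * J ≤ I := by
      rw [hJdef, hIdef, ← intervalIntegral.integral_const_mul]
      apply intervalIntegral.integral_mono_on h01
      · apply ContinuousOn.intervalIntegrable
        exact continuousOn_const.mul
          ((Real.continuous_exp.comp (continuous_const.mul continuous_id)).continuousOn)
      · apply ContinuousOn.intervalIntegrable
        rw [Set.uIcc_of_le h01]
        exact (hecr.continuousOn).mul (hZc1.mono (Set.Icc_subset_Icc ht0 le_rfl))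
      · intro u hu
        have h1 := hZlow t0 u ht0 hu.1
        have h2 := mul_le_mul_of_nonneg_left h1 (le_of_lt (Real.exp_pos (-(r * u))))
        have q : Real.exp (-(r * u)) * Real.exp (-(ρ * (1 - α)) * (u - t0))
            = Real.exp (ρ * (1 - α) * t0) * Real.exp (-k * u) := by
          rw [← Real.exp_add, ← Real.exp_add]; congr 1; rw [hkdef]; ring
        have q' := congrArg (fun x => Z t0 * x) q
        linarith [h2, q'.le, q'.ge]
    have hZ1low := hZlow t0 t1 ht0 h01
    -- numeric contradiction
    have hαk : α / k * k = α := div_mul_cancel₀ α hkpos.ne'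
    have q1 : Real.exp (-(r * t1)) * Real.exp (r * (t1 - t0)) = Real.exp (-(r * t0)) := by
      rw [← Real.exp_add]; congr 1; ring
    have q2 : Real.exp (ρ * (1 - α) * t0) * Real.exp (-k * t0) = Real.exp (-(r * t0)) := by
      rw [← Real.exp_add]; congr 1; rw [hkdef]; ring
    have q3 : Real.exp (ρ * (1 - α) * t0) * Real.exp (-k * t1)
        = Real.exp (-(r * t1)) * Real.exp (-(ρ * (1 - α)) * (t1 - t0)) := by
      rw [← Real.exp_add, ← Real.exp_add]; congr 1; rw [hkdef]; ring
    have st1 : (r + ρ) * (Z t0 * Real.exp (ρ * (1 - α) * t0) * J) ≤ (r + ρ) * I :=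
      mul_le_mul_of_nonneg_left hIlow (by positivity)
    have st2 : Real.exp (-(r * t1)) * (Z t0 * Real.exp (-(ρ * (1 - α)) * (t1 - t0)))
        ≤ Real.exp (-(r * t1)) * Z t1 :=
      mul_le_mul_of_nonneg_left hZ1low (le_of_lt (Real.exp_pos _))
    have st3 : ρ * (Real.exp (-(r * t1)) * W t1)
        ≤ ρ * (Real.exp (-(r * t0)) * W t0) + Real.exp (-(r * t0)) * Z t0
          - (r + ρ) * (Z t0 * Real.exp (ρ * (1 - α) * t0) * J)
          - Real.exp (-(r * t1)) * (Z t0 * Real.exp (-(ρ * (1 - α)) * (t1 - t0))) := by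
      linarith [master, st1, st2]
    have st5 := mul_le_mul_of_nonneg_left st3 hkpos.le
    have hW0 : W t0 = α / k * Z t0 - ε := by rw [hεdef]; ring
    have idR : k * (ρ * (Real.exp (-(r * t0)) * W t0) + Real.exp (-(r * t0)) * Z t0
          - (r + ρ) * (Z t0 * Real.exp (ρ * (1 - α) * t0) * J)
          - Real.exp (-(r * t1)) * (Z t0 * Real.exp (-(ρ * (1 - α)) * (t1 - t0))))
        = k * (ρ * (-(ε * Real.exp (-(r * t0)))
            + α / k * Z t0 * (Real.exp (-(r * t1))
              * Real.exp (-(ρ * (1 - α)) * (t1 - t0))))) := by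
      rw [hW0]
      linear_combination (ρ * Real.exp (-(r * t0)) * Z t0
            - ρ * Z t0 * Real.exp (-(r * t1)) * Real.exp (-(ρ * (1 - α)) * (t1 - t0))) * hαk
        + (-(r + ρ) * Z t0 * Real.exp (ρ * (1 - α) * t0)) * hkJ
        + (-(r + ρ) * Z t0) * q2
        + ((r + ρ) * Z t0) * q3
        + (Z t0 * Real.exp (-(r * t0))
            - Z t0 * Real.exp (-(r * t1)) * Real.exp (-(ρ * (1 - α)) * (t1 - t0))) * hkdef
    have st6 : (k * ρ) * (Real.exp (-(r * t1)) * W t1)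
        ≤ (k * ρ) * (-(ε * Real.exp (-(r * t0)))
            + α / k * Z t0 * (Real.exp (-(r * t1))
              * Real.exp (-(ρ * (1 - α)) * (t1 - t0)))) := by
      rw [mul_assoc, mul_assoc]
      exact st5.trans (le_of_eq idR)
    have stB := le_of_mul_le_mul_left st6 (mul_pos hkpos hρ)
    have hE2le : Real.exp (-(ρ * (1 - α)) * (t1 - t0)) ≤ 1 := by
      rw [Real.exp_le_one_iff]
      nlinarith [mul_nonneg (mul_nonneg hρ.le (by linarith : (0:ℝ) ≤ 1 - α))
        (by linarith : (0:ℝ) ≤ t1 - t0)]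
    have hfin1 : Real.exp (-(r * t1)) * W t1
        ≤ -(ε * Real.exp (-(r * t0))) + α / k * Z t0 * Real.exp (-(r * t1)) := by
      nlinarith [stB, hE2le, mul_pos hxbZ (Real.exp_pos (-(r * t1)))]
    have hεE1 : ε * Real.exp (r * (t1 - t0)) = α / k * Z t0 + ε := by
      rw [hE1, hXdef]
      field_simp
    have e5 : ε * Real.exp (-(r * t0)) = Real.exp (-(r * t1)) * (α / k * Z t0 + ε) := by
      rw [← q1, ← hεE1]; ring
    have hfin2 : Real.exp (-(r * t1)) * W t1 ≤ Real.exp (-(r * t1)) * (-ε) := by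
      have heq : -(ε * Real.exp (-(r * t0))) + α / k * Z t0 * Real.exp (-(r * t1))
          = Real.exp (-(r * t1)) * (-ε) := by rw [e5]; ring
      exact hfin1.trans (le_of_eq heq)
    have hfin3 := le_of_mul_le_mul_left hfin2 (Real.exp_pos (-(r * t1)))
    have := hpos t1 ht10
    linarith
  · -- easy direction
    intro hge t ht
    have h2 : 0 < α / (r + ρ * (1 - α)) * Z t := mul_pos (div_pos hα0 hkpos) (hZpos t ht)
    linarith [hge t ht]
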